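/- arXiv:1304.7478 — 3 statements merged into one kernel-verified Lean document; each statement's English description precedes it below -/
import Mathlib

section
/- Let q₀ be a nonzero complex number and q₁, q₂ complex numbers. There exists (k₁, k₂) ∈ ℝ² with q₀ + q₁e^{-ik₁} + q₂e^{-ik₂} = 0 if and only if | |q₁/q₀| - |q₂/q₀| | ≤ 1 ≤ |q₁/q₀| + |q₂/q₀|. -/
lemma aux_phase (q z : ℂ) (h : ‖z‖ = ‖q‖) :
    ∃ k : ℝ, q * Complex.exp (-Complex.I * k) = z := by
  by_cases hq : q = 0
  · refine ⟨0, ?_⟩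
    have : ‖z‖ = 0 := by simp [h, hq]
    have hz : z = 0 := by simpa using this
    simp [hq, hz]
  · refine ⟨-(z / q).arg, ?_⟩
    have habs : ‖z / q‖ = 1 := by
      rw [norm_div, h, div_self]
      simpa using hq
    have := Complex.norm_mul_exp_arg_mul_I (z / q)
    rw [habs] at this
    have h2 : Complex.exp ((z / q).arg * Complex.I) = z / q := by
      simpa using this
    have h3 : -Complex.I * ((-(z / q).arg : ℝ) : ℂ) = ((z / q).arg : ℝ) * Complex.I := by
      push_cast; ring
    rw [h3, h2]
    field_simp

lemma aux_triangle (r₀ r₁ r₂ : ℝ) (h0 : 0 < r₀) (h1 : 0 ≤ r₁) (h2 : 0 ≤ r₂)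
    (ha : |r₁ - r₂| ≤ r₀) (hb : r₀ ≤ r₁ + r₂) :
    ∃ z₁ z₂ : ℂ, ‖z₁‖ = r₁ ∧ ‖z₂‖ = r₂ ∧ z₁ + z₂ = (r₀ : ℂ) := by
  have ha' := abs_le.mp ha
  set x : ℝ := (r₀ ^ 2 + r₁ ^ 2 - r₂ ^ 2) / (2 * r₀) with hx
  have hx2 : x ^ 2 ≤ r₁ ^ 2 := by
    rw [hx, div_pow, div_le_iff₀ (by positivity)]
    have hA : 0 ≤ r₀ + r₁ - r₂ := by linarith [ha'.1]
    have hB : 0 ≤ r₀ + r₁ + r₂ := by linarith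
    have hC : 0 ≤ r₁ + r₂ - r₀ := by linarith
    have hD : 0 ≤ r₂ + r₀ - r₁ := by linarith [ha'.2]
    nlinarith [mul_nonneg (mul_nonneg hB hA) (mul_nonneg hD hC)]
  set y : ℝ := Real.sqrt (r₁ ^ 2 - x ^ 2) with hy
  have hy2 : y ^ 2 = r₁ ^ 2 - x ^ 2 := Real.sq_sqrt (by linarith)
  refine ⟨⟨x, y⟩, ⟨r₀ - x, -y⟩, ?_, ?_, ?_⟩
  · rw [Complex.norm_def, Complex.normSq_mk]
    rw [show x * x + y * y = r₁ ^ 2 by nlinarith]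
    exact Real.sqrt_sq h1
  · rw [Complex.norm_def, Complex.normSq_mk]
    rw [show (r₀ - x) * (r₀ - x) + -y * -y = r₂ ^ 2 by
      have : x * (2 * r₀) = r₀ ^ 2 + r₁ ^ 2 - r₂ ^ 2 := by
        rw [hx]; field_simp
      nlinarith]
    exact Real.sqrt_sq h2
  · apply Complex.ext <;> simp

/-- gapless condition for the graphene nearest-neighbor model: there is
`(k₁,k₂)` with `q₀ + q₁e^{-ik₁} + q₂e^{-ik₂} = 0` iff
`| |q₁/q₀| - |q₂/q₀| | ≤ 1 ≤ |q₁/q₀| + |q₂/q₀|`. -/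
theorem graphene_gapless_condition (q₀ q₁ q₂ : ℂ) (hq₀ : q₀ ≠ 0) :
    (∃ k₁ k₂ : ℝ,
        q₀ + q₁ * Complex.exp (-Complex.I * k₁) + q₂ * Complex.exp (-Complex.I * k₂) = 0)
      ↔ |‖q₁ / q₀‖ - ‖q₂ / q₀‖| ≤ 1 ∧
        1 ≤ ‖q₁ / q₀‖ + ‖q₂ / q₀‖ := by
  set r₀ := ‖q₀‖ with hr₀
  have h0 : 0 < r₀ := by simpa [hr₀] using hq₀
  set r₁ := ‖q₁‖
  set r₂ := ‖q₂‖
  have hdiv1 : ‖q₁ / q₀‖ = r₁ / r₀ := norm_div q₁ q₀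
  have hdiv2 : ‖q₂ / q₀‖ = r₂ / r₀ := norm_div q₂ q₀
  rw [hdiv1, hdiv2]
  have key : (|r₁ / r₀ - r₂ / r₀| ≤ 1 ∧ 1 ≤ r₁ / r₀ + r₂ / r₀) ↔
      (|r₁ - r₂| ≤ r₀ ∧ r₀ ≤ r₁ + r₂) := by
    rw [div_sub_div_same, abs_div, abs_of_pos h0, div_le_one h0, ← add_div,
      le_div_iff₀ h0, one_mul]
  rw [key]
  constructor
  · rintro ⟨k₁, k₂, hk⟩
    have e1 : ‖q₁ * Complex.exp (-Complex.I * k₁)‖ = r₁ := by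
      rw [norm_mul, Complex.norm_exp]
      simp [r₁]
    have e2 : ‖q₂ * Complex.exp (-Complex.I * k₂)‖ = r₂ := by
      rw [norm_mul, Complex.norm_exp]
      simp [r₂]
    set u := q₁ * Complex.exp (-Complex.I * k₁)
    set v := q₂ * Complex.exp (-Complex.I * k₂)
    have huv : u + v = -q₀ := by linear_combination hk
    have habs : ‖u + v‖ = r₀ := by rw [huv]; simp [hr₀]
    constructor
    · have := abs_norm_sub_norm_le u (-v)
      rw [sub_neg_eq_add, norm_neg] at this
      rw [← e1, ← e2, ← habs]
      exact this
    · rw [← e1, ← e2, ← habs]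
      exact norm_add_le u v
  · rintro ⟨ha, hb⟩
    obtain ⟨z₁, z₂, hz1, hz2, hzsum⟩ :=
      aux_triangle r₀ r₁ r₂ h0 (norm_nonneg q₁) (norm_nonneg q₂) ha hb
    set w : ℂ := -q₀ / (r₀ : ℂ) with hw
    have hr0ne : ((r₀ : ℂ)) ≠ 0 := by
      simpa using h0.ne'
    have hwabs : ‖w‖ = 1 := by
      rw [hw, norm_div, norm_neg, Complex.norm_real, Real.norm_eq_abs, abs_of_pos h0]
      exact div_self h0.ne'
    have h1 : ‖z₁ * w‖ = r₁ := by rw [norm_mul, hz1, hwabs, mul_one]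
    have h2 : ‖z₂ * w‖ = r₂ := by rw [norm_mul, hz2, hwabs, mul_one]
    obtain ⟨k₁, hk₁⟩ := aux_phase q₁ (z₁ * w) h1
    obtain ⟨k₂, hk₂⟩ := aux_phase q₂ (z₂ * w) h2
    have hs : z₁ * w + z₂ * w = -q₀ := by
      rw [← add_mul, hzsum, hw]
      field_simp
    exact ⟨k₁, k₂, by linear_combination hk₁ + hk₂ + hs⟩
end

section
/- For real parameters q₁, q₂ ∈ [0,2] and q₃ ∈ [-1,1], define E(k₁,k₂) = (q₃² + |1 + q₁e^{-ik₁} + q₂e^{-ik₂}|²)^{1/2}. Then min over (k₁,k₂) ∈ ℝ² of E(k₁,k₂) is strictly positive if and only if q₃ ≠ 0, or q₂ < q₁ - 1, or q₂ > q₁ + 1, or q₂ < 1 - q₁. -/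
private lemma unit_abs' (t : ℝ) : ‖Complex.exp (-Complex.I * t)‖ = 1 := by
  rw [Complex.norm_exp]; simp

private lemma tri1 (u v w : ℂ) :
    ‖u‖ - ‖v‖ - ‖w‖ ≤ ‖u + v + w‖ := by
  have h1 := norm_sub_norm_le u (-(v+w))
  rw [norm_neg, sub_neg_eq_add] at h1
  have h2 := norm_add_le v w
  have h3 : u + (v + w) = u + v + w := by ring
  rw [h3] at h1
  linarith

private lemma exists_zero' (q₁ q₂ : ℝ) (h10 : 0 ≤ q₁) (h20 : 0 ≤ q₂) (hA : q₁ - 1 ≤ q₂)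
    (hB : q₂ ≤ q₁ + 1) (hC : 1 - q₁ ≤ q₂) :
    ∃ k₀ : ℝ × ℝ, ‖1 + (q₁:ℂ) * Complex.exp (-Complex.I * k₀.1)
        + (q₂:ℂ) * Complex.exp (-Complex.I * k₀.2)‖ = 0 := by
  have hexppi : Complex.exp (-Complex.I * ((Real.pi : ℝ) : ℂ)) = -1 := by
    have : -Complex.I * ((Real.pi : ℝ) : ℂ) = -(Real.pi * Complex.I) := by push_cast; ring
    rw [this, Complex.exp_neg, Complex.exp_pi_mul_I]
    norm_num
  rcases eq_or_lt_of_le h20 with hq2 | hq2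
  · -- q₂ = 0, q₁ = 1
    have hq1 : q₁ = 1 := by linarith
    refine ⟨(Real.pi, 0), ?_⟩
    simp only [hq1, ← hq2, hexppi]
    norm_num
  rcases eq_or_lt_of_le h10 with hq1 | hq1
  · -- q₁ = 0, q₂ = 1
    have hq2' : q₂ = 1 := by linarith
    refine ⟨(0, Real.pi), ?_⟩
    simp only [hq2', ← hq1, hexppi]
    norm_num
  -- general case
  set x : ℝ := (q₂^2 - 1 - q₁^2) / (2*q₁) with hxdef
  have hx : 2*q₁*x = q₂^2 - 1 - q₁^2 := by rw [hxdef]; field_simp [hq1.ne']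
  have hx1 : -1 ≤ x := by
    rw [hxdef, le_div_iff₀ (by linarith)]
    nlinarith
  have hx2 : x ≤ 1 := by
    rw [hxdef, div_le_iff₀ (by linarith)]
    nlinarith
  set θ := Real.arccos x with hθ
  have hc : Real.cos θ = x := Real.cos_arccos hx1 hx2
  have hsc := Real.sin_sq_add_cos_sq θ
  set u : ℂ := 1 + (q₁:ℂ) * ((Real.cos θ : ℂ) + (Real.sin θ : ℂ) * Complex.I) with hu
  have hnsq : Complex.normSq u = q₂^2 := by
    rw [hu]
    simp only [Complex.normSq_apply, Complex.add_re, Complex.add_im, Complex.mul_re,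
      Complex.mul_im, Complex.one_re, Complex.one_im, Complex.ofReal_re, Complex.ofReal_im,
      Complex.I_re, Complex.I_im]
    ring_nf
    nlinarith [hsc, hc, hx]
  have habsu : ‖u‖ = q₂ := by
    have h2 : (‖u‖)^2 = q₂^2 := by rw [Complex.sq_norm, hnsq]
    calc ‖u‖ = Real.sqrt ((‖u‖)^2) :=
          (Real.sqrt_sq (norm_nonneg _)).symm
      _ = Real.sqrt (q₂^2) := by rw [h2]
      _ = q₂ := Real.sqrt_sq h20
  set w : ℂ := -u / (q₂:ℂ) with hw
  have hq2ne : (q₂:ℂ) ≠ 0 := by exact_mod_cast hq2.ne'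
  have habsw : ‖w‖ = 1 := by
    rw [hw, norm_div, norm_neg, habsu, Complex.norm_real, Real.norm_of_nonneg h20,
      div_self hq2.ne']
  have hwexp : Complex.exp (-Complex.I * ((-Complex.arg w : ℝ) : ℂ)) = w := by
    have h1 := Complex.norm_mul_exp_arg_mul_I w
    rw [habsw] at h1
    have h2 : -Complex.I * ((-Complex.arg w : ℝ) : ℂ) = (Complex.arg w : ℂ) * Complex.I := by
      push_cast; ring
    rw [h2]
    simpa using h1
  have hzexp : Complex.exp (-Complex.I * ((-θ : ℝ) : ℂ))
      = (Real.cos θ : ℂ) + (Real.sin θ : ℂ) * Complex.I := by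
    have h2 : -Complex.I * ((-θ : ℝ) : ℂ) = (θ : ℂ) * Complex.I := by push_cast; ring
    rw [h2, Complex.exp_mul_I, ← Complex.ofReal_cos, ← Complex.ofReal_sin]
  refine ⟨(-θ, -Complex.arg w), ?_⟩
  simp only [hwexp, hzexp]
  have : 1 + (q₁:ℂ) * ((Real.cos θ : ℂ) + (Real.sin θ : ℂ) * Complex.I) + (q₂:ℂ) * w = 0 := by
    rw [hw, ← hu]
    field_simp
    ring
  rw [this]
  simp

/-- the uniaxial strain model with `q₁, q₂ ∈ [0,2]`, `q₃ ∈ [-1,1]` is gapped at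
Fermi energy 0, i.e. the minimum over `(k₁,k₂)` of
`E(k₁,k₂) = (q₃² + |1 + q₁e^{-ik₁} + q₂e^{-ik₂}|²)^{1/2}` is strictly positive, iff
`q₃ ≠ 0` or `q₂ < q₁ - 1` or `q₂ > q₁ + 1` or `q₂ < 1 - q₁`. -/
theorem uniaxial_strain_gapped_iff
    (q₁ q₂ q₃ : ℝ) (h₁ : q₁ ∈ Set.Icc (0:ℝ) 2) (h₂ : q₂ ∈ Set.Icc (0:ℝ) 2)
    (h₃ : q₃ ∈ Set.Icc (-1:ℝ) 1)
    (E : ℝ × ℝ → ℝ)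
    (hE : ∀ k : ℝ × ℝ, E k = Real.sqrt (q₃^2 +
      (‖1 + (q₁:ℂ) * Complex.exp (-Complex.I * k.1)
        + (q₂:ℂ) * Complex.exp (-Complex.I * k.2)‖)^2)) :
    0 < sInf (Set.range E) ↔ (q₃ ≠ 0 ∨ q₂ < q₁ - 1 ∨ q₂ > q₁ + 1 ∨ q₂ < 1 - q₁) := by
  obtain ⟨h10, h12⟩ := h₁
  obtain ⟨h20, h22⟩ := h₂
  have hEnn : ∀ k, 0 ≤ E k := fun k => (hE k) ▸ Real.sqrt_nonneg _
  -- abbreviation for abs f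
  set F : ℝ × ℝ → ℝ := fun k => ‖1 + (q₁:ℂ) * Complex.exp (-Complex.I * k.1)
        + (q₂:ℂ) * Complex.exp (-Complex.I * k.2)‖ with hF
  have habs : ∀ k : ℝ × ℝ,
      1 - q₁ - q₂ ≤ F k ∧ q₁ - 1 - q₂ ≤ F k ∧ q₂ - 1 - q₁ ≤ F k := by
    intro k
    have e1 : ‖(1:ℂ)‖ = 1 := by simp
    have e2 : ‖(q₁:ℂ) * Complex.exp (-Complex.I * k.1)‖ = q₁ := by
      rw [norm_mul, unit_abs', Complex.norm_real, Real.norm_of_nonneg h10, mul_one]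
    have e3 : ‖(q₂:ℂ) * Complex.exp (-Complex.I * k.2)‖ = q₂ := by
      rw [norm_mul, unit_abs', Complex.norm_real, Real.norm_of_nonneg h20, mul_one]
    refine ⟨?_, ?_, ?_⟩
    · have := tri1 (1:ℂ) ((q₁:ℂ) * Complex.exp (-Complex.I * k.1))
        ((q₂:ℂ) * Complex.exp (-Complex.I * k.2))
      rw [e1, e2, e3] at this; exact this
    · have := tri1 ((q₁:ℂ) * Complex.exp (-Complex.I * k.1)) (1:ℂ)
        ((q₂:ℂ) * Complex.exp (-Complex.I * k.2))
      rw [e1, e2, e3] at this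
      have heq : (q₁:ℂ) * Complex.exp (-Complex.I * k.1) + 1
          + (q₂:ℂ) * Complex.exp (-Complex.I * k.2)
          = 1 + (q₁:ℂ) * Complex.exp (-Complex.I * k.1)
          + (q₂:ℂ) * Complex.exp (-Complex.I * k.2) := by ring
      rw [heq] at this; exact this
    · have := tri1 ((q₂:ℂ) * Complex.exp (-Complex.I * k.2)) (1:ℂ)
        ((q₁:ℂ) * Complex.exp (-Complex.I * k.1))
      rw [e1, e2, e3] at this
      have heq : (q₂:ℂ) * Complex.exp (-Complex.I * k.2) + 1
          + (q₁:ℂ) * Complex.exp (-Complex.I * k.1)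
          = 1 + (q₁:ℂ) * Complex.exp (-Complex.I * k.1)
          + (q₂:ℂ) * Complex.exp (-Complex.I * k.2) := by ring
      rw [heq] at this; exact this
  have hEF : ∀ k, F k ≤ E k := by
    intro k
    rw [hE k]
    have : F k = Real.sqrt ((F k)^2) := (Real.sqrt_sq (norm_nonneg _)).symm
    rw [this]
    exact Real.sqrt_le_sqrt (by nlinarith [sq_nonneg q₃])
  have hEq3 : ∀ k, |q₃| ≤ E k := by
    intro k
    rw [hE k]
    have : |q₃| = Real.sqrt (q₃^2) := (Real.sqrt_sq_eq_abs q₃).symm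
    rw [this]
    exact Real.sqrt_le_sqrt (by nlinarith [sq_nonneg (F k)])
  constructor
  · intro hpos
    by_contra hcon
    push_neg at hcon
    obtain ⟨hq3, hA, hB, hC⟩ := hcon
    -- build a zero of F
    have hz : ∃ k₀ : ℝ × ℝ, F k₀ = 0 := exists_zero' q₁ q₂ h10 h20 hA hB hC
    obtain ⟨k₀, hk₀⟩ := hz
    have hE0 : E k₀ = 0 := by
      rw [hE k₀, hq3]
      rw [hF] at hk₀
      simp only at hk₀
      rw [hk₀]
      simp
    have hle : sInf (Set.range E) ≤ 0 := by
      have : sInf (Set.range E) ≤ E k₀ :=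
        csInf_le ⟨0, by rintro b ⟨k, rfl⟩; exact hEnn k⟩ (Set.mem_range_self _)
      linarith [this, hE0.le, hE0.ge]
    linarith
  · intro h
    have hne : (Set.range E).Nonempty := ⟨E (0,0), Set.mem_range_self _⟩
    rcases h with h | h | h | h
    · have : |q₃| ≤ sInf (Set.range E) :=
        le_csInf hne (by rintro b ⟨k, rfl⟩; exact hEq3 k)
      have := abs_pos.mpr h
      linarith
    · have : q₁ - 1 - q₂ ≤ sInf (Set.range E) :=
        le_csInf hne (by rintro b ⟨k, rfl⟩; exact le_trans (habs k).2.1 (hEF k))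
      linarith
    · have : q₂ - 1 - q₁ ≤ sInf (Set.range E) :=
        le_csInf hne (by rintro b ⟨k, rfl⟩; exact le_trans (habs k).2.2 (hEF k))
      linarith
    · have : 1 - q₁ - q₂ ≤ sInf (Set.range E) :=
        le_csInf hne (by rintro b ⟨k, rfl⟩; exact le_trans (habs k).1 (hEF k))
      linarith
end

section
/- Let P and Q be orthogonal projections on a Hilbert space (or self-adjoint idempotents in a unital C*-algebra) with ‖P - Q‖ < 1. Then the operator U := (QP + (1-Q)(1-P))·(1 - (Q-P)²)^{-1/2} is a well-defined unitary satisfying Q = U P U*. -/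
open scoped NNReal

section aux
variable {A : Type*} [CStarAlgebra A]

lemma my_isClosed_centralizer (s : Set A) : IsClosed (Set.centralizer s) := by
  have h : Set.centralizer s = ⋂ m ∈ s, {x : A | m * x = x * m} := by
    ext x; simp [Set.mem_centralizer_iff, Set.mem_iInter]
  rw [h]
  exact isClosed_biInter fun m _ =>
    isClosed_eq (continuous_const.mul continuous_id) (continuous_id.mul continuous_const)

lemma my_cfc_mem_elemental (a : A) [ha : IsStarNormal a] (f : ℂ → ℂ) :
    cfc f a ∈ StarAlgebra.elemental ℂ a := by
  by_cases hf : ContinuousOn f (spectrum ℂ a)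
  · rw [cfc_apply f a ha hf, cfcHom_eq_of_isStarNormal]
    exact Subtype.coe_prop _
  · rw [cfc_apply_of_not_continuousOn a hf]
    exact zero_mem _

lemma my_commute_cfc_complex {a b : A} (ha : IsStarNormal a) (hb : IsSelfAdjoint b)
    (h : Commute b a) (f : ℂ → ℂ) : Commute b (cfc f a) := by
  haveI := ha
  have hmem : a ∈ StarSubalgebra.centralizer ℂ ({b} : Set A) := by
    rw [StarSubalgebra.mem_centralizer_iff]
    rintro g rfl
    exact ⟨h.eq, by rw [hb.star_eq]; exact h.eq⟩
  have hclosed : IsClosed ((StarSubalgebra.centralizer ℂ ({b} : Set A)) : Set A) := by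
    rw [StarSubalgebra.coe_centralizer]
    exact my_isClosed_centralizer _
  have hle := StarAlgebra.elemental.le_of_mem hclosed hmem
  have := hle (my_cfc_mem_elemental a f)
  rw [StarSubalgebra.mem_centralizer_iff] at this
  exact (this b rfl).1

end aux

section sqrtcomm
variable {A : Type*} [CStarAlgebra A] [PartialOrder A] [StarOrderedRing A]

lemma my_commute_sqrt {a b : A} (ha : 0 ≤ a) (hb : IsSelfAdjoint b)
    (h : Commute b a) : Commute b (CFC.sqrt a) := by
  rw [CFC.sqrt_eq_cfc, cfc_nnreal_eq_real _ _ ha,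
    cfc_real_eq_complex _ (IsSelfAdjoint.of_nonneg ha)]
  exact my_commute_cfc_complex (IsSelfAdjoint.of_nonneg ha).isStarNormal hb h _

end sqrtcomm

/-- if `P, Q` are projections in a unital C*-algebra with `‖P - Q‖ < 1`, then
`U := (QP + (1-Q)(1-P))·(1 - (Q-P)²)^{-1/2}` is a well-defined unitary with `Q = U P U*`. -/
theorem kato_unitary_intertwiner
    {A : Type*} [CStarAlgebra A] [PartialOrder A] [StarOrderedRing A]
    (P Q : A) (hP : IsIdempotentElem P) (hPsa : IsSelfAdjoint P)
    (hQ : IsIdempotentElem Q) (hQsa : IsSelfAdjoint Q)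
    (hnorm : ‖P - Q‖ < 1)
    (U : A)
    (hU : U = (Q * P + (1 - Q) * (1 - P)) * Ring.inverse (CFC.sqrt (1 - (Q - P)^2))) :
    IsUnit (CFC.sqrt (1 - (Q - P)^2)) ∧
    U * star U = 1 ∧ star U * U = 1 ∧ Q = U * P * star U := by
  have hPmul : ∀ x : A, P * (P * x) = P * x := fun x => by rw [← mul_assoc, hP.eq]
  have hQmul : ∀ x : A, Q * (Q * x) = Q * x := fun x => by rw [← mul_assoc, hQ.eq]
  set V : A := Q * P + (1 - Q) * (1 - P) with hVdef
  set W : A := P * Q + (1 - P) * (1 - Q) with hWdef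
  -- algebraic identities
  have hDP : Commute ((Q - P)^2) P := by
    rw [commute_iff_eq]
    simp only [pow_two, sub_mul, mul_sub, add_mul, mul_add, mul_assoc, mul_one, one_mul,
      hP.eq, hQ.eq, hPmul, hQmul]
    noncomm_ring
  have hDQ : Commute ((Q - P)^2) Q := by
    rw [commute_iff_eq]
    simp only [pow_two, sub_mul, mul_sub, add_mul, mul_add, mul_assoc, mul_one, one_mul,
      hP.eq, hQ.eq, hPmul, hQmul]
    noncomm_ring
  have hVW : V * W = 1 - (Q - P)^2 := by
    rw [hVdef, hWdef]
    simp only [pow_two, sub_mul, mul_sub, add_mul, mul_add, mul_assoc, mul_one, one_mul,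
      hP.eq, hQ.eq, hPmul, hQmul]
    noncomm_ring
  have hWV : W * V = 1 - (Q - P)^2 := by
    rw [hVdef, hWdef]
    simp only [pow_two, sub_mul, mul_sub, add_mul, mul_add, mul_assoc, mul_one, one_mul,
      hP.eq, hQ.eq, hPmul, hQmul]
    noncomm_ring
  have hVP : V * P = Q * V := by
    rw [hVdef]
    simp only [sub_mul, mul_sub, add_mul, mul_add, mul_assoc, mul_one, one_mul,
      hP.eq, hQ.eq, hPmul, hQmul]
    noncomm_ring
  -- positivity and norms
  have hQPsa : IsSelfAdjoint (Q - P) := hQsa.sub hPsa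
  have hD0 : (0 : A) ≤ (Q - P)^2 := by
    rw [pow_two]
    nth_rewrite 1 [← hQPsa.star_eq]
    exact star_mul_self_nonneg _
  have hDnorm : ‖(Q - P)^2‖ < 1 := by
    rw [pow_two]
    calc ‖(Q - P) * (Q - P)‖ = ‖star (Q - P) * (Q - P)‖ := by rw [hQPsa.star_eq]
      _ = ‖Q - P‖ * ‖Q - P‖ := CStarRing.norm_star_mul_self
      _ < 1 := by
          have h1 : ‖Q - P‖ < 1 := by rwa [norm_sub_rev] at hnorm
          nlinarith [norm_nonneg (Q - P)]
  have hsub0 : (0 : A) ≤ 1 - (Q - P)^2 := by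
    rw [sub_nonneg]
    exact (CStarAlgebra.norm_le_one_iff_of_nonneg _ hD0).mp hDnorm.le
  set S : A := CFC.sqrt (1 - (Q - P)^2) with hSdef
  have hS2 : S * S = 1 - (Q - P)^2 := CFC.sqrt_mul_sqrt_self _ hsub0
  have hSsa : IsSelfAdjoint S := IsSelfAdjoint.of_nonneg (CFC.sqrt_nonneg _)
  have hUnit1 : IsUnit ((1 : A) - (Q - P)^2) := ⟨Units.oneSub _ hDnorm, rfl⟩
  have hSunit : IsUnit S := by
    obtain ⟨u, hu⟩ := hUnit1
    have hcomm : Commute S ((1 : A) - (Q - P)^2) := by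
      rw [← hS2]; exact (Commute.refl S).mul_right (Commute.refl S)
    have hcu : Commute S (u : A) := by rw [hu]; exact hcomm
    have hcui := hcu.units_inv_right
    refine ⟨⟨S, ↑u⁻¹ * S, ?_, ?_⟩, rfl⟩
    · calc S * (↑u⁻¹ * S) = ↑u⁻¹ * (S * S) := by rw [← mul_assoc, hcui.eq, mul_assoc]
        _ = ↑u⁻¹ * ↑u := by rw [hS2, hu]
        _ = 1 := u.inv_mul
    · calc (↑u⁻¹ * S) * S = ↑u⁻¹ * (S * S) := by rw [mul_assoc]
        _ = ↑u⁻¹ * ↑u := by rw [hS2, hu]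
        _ = 1 := u.inv_mul
  set T : A := Ring.inverse S with hTdef
  have hST : S * T = 1 := Ring.mul_inverse_cancel _ hSunit
  have hTS : T * S = 1 := Ring.inverse_mul_cancel _ hSunit
  have hTsa : star T = T := by
    have h1 := congrArg star hST
    rw [star_mul, star_one, hSsa.star_eq] at h1
    calc star T = star T * (S * T) := by rw [hST, mul_one]
      _ = (star T * S) * T := by rw [mul_assoc]
      _ = T := by rw [h1, one_mul]
  have hcommT : ∀ x : A, Commute x S → Commute x T := by
    intro x hx
    have h1 : Commute x (hSunit.unit : A) := by rwa [hSunit.unit_spec]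
    have h2 := h1.units_inv_right
    rw [hTdef, ← hSunit.unit_spec, Ring.inverse_unit hSunit.unit]
    exact h2
  -- commutation with S
  have hPS : Commute P S := by
    refine my_commute_sqrt hsub0 hPsa ?_
    exact (Commute.one_right P).sub_right hDP.symm
  have hQS : Commute Q S := by
    refine my_commute_sqrt hsub0 hQsa ?_
    exact (Commute.one_right Q).sub_right hDQ.symm
  have hVS : Commute V S := by
    rw [hVdef]
    exact (hQS.mul_left hPS).add_left
      (((Commute.one_left S).sub_left hQS).mul_left ((Commute.one_left S).sub_left hPS))
  have hVT : Commute V T := hcommT V hVS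
  have hPT : Commute P T := hcommT P hPS
  have hVT2 : Commute V (T * T) := hVT.mul_right hVT
  have hstarU : star U = T * W := by
    rw [hU, star_mul, hTsa, hVdef, hWdef]
    simp [star_mul, hPsa.star_eq, hQsa.star_eq]
  have hUVT : U = V * T := hU
  have key : (V * T) * (T * W) = 1 := by
    calc (V * T) * (T * W) = (V * (T * T)) * W := by noncomm_ring
      _ = ((T * T) * V) * W := by rw [hVT2.eq]
      _ = (T * T) * (V * W) := by noncomm_ring
      _ = (T * T) * (S * S) := by rw [hVW, ← hS2]
      _ = T * ((T * S) * S) := by noncomm_ring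
      _ = T * (1 * S) := by rw [hTS]
      _ = 1 := by rw [one_mul, hTS]
  refine ⟨hSunit, ?_, ?_, ?_⟩
  · rw [hstarU, hUVT]; exact key
  · rw [hstarU, hUVT]
    calc (T * W) * (V * T) = T * ((W * V) * T) := by noncomm_ring
      _ = T * ((S * S) * T) := by rw [hWV, ← hS2]
      _ = (T * S) * (S * T) := by noncomm_ring
      _ = 1 := by rw [hTS, hST, one_mul]
  · rw [hstarU, hUVT]
    calc Q = Q * ((V * T) * (T * W)) := by rw [key, mul_one]
      _ = (Q * V) * (T * (T * W)) := by noncomm_ring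
      _ = (V * P) * (T * (T * W)) := by rw [hVP]
      _ = V * ((P * T) * (T * W)) := by noncomm_ring
      _ = V * ((T * P) * (T * W)) := by rw [hPT.eq]
      _ = V * T * P * (T * W) := by noncomm_ring
end
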